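/- Let n be a natural number, σ > 0 a real number, and γ the probability measure on Matrix (Fin n) (Fin n) ℝ given by the product measure whose coordinates are all gaussianReal 0 σ². Let D be an orthogonal n×n real matrix, i.e. D * Dᵀ = 1. Then the pushforward of γ under the map A ↦ D * (A + Aᵀ) * Dᵀ equals the pushforward of γ under the map A ↦ A + Aᵀ. In other words, the law of the symmetric Gaussian random matrix M = A + Aᵀ is invariant under conjugation by D. -/

import Mathlib

open Matrix MeasureTheory ProbabilityTheory Set

/-- The measurable space structure on matrices, inherited from the product
measurable structure on functions. -/
instance matrixMeasurableSpace {m n α : Type*} [MeasurableSpace α] :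
    MeasurableSpace (Matrix m n α) :=
  inferInstanceAs (MeasurableSpace (m → n → α))

theorem goeAux_lintegral_fin_prod {m : ℕ} {E : Fin m → Type*} [∀ i, MeasurableSpace (E i)]
    (μ : ∀ i, Measure (E i)) [∀ i, SigmaFinite (μ i)]
    (f : ∀ i, E i → ENNReal) (hf : ∀ i, Measurable (f i)) :
    ∫⁻ x, ∏ i, f i (x i) ∂(Measure.pi μ) = ∏ i, ∫⁻ x, f i x ∂(μ i) := by
  induction m with
  | zero => simp
  | succ m ih =>
    rw [← ((measurePreserving_piFinSuccAbove μ 0).symm).lintegral_comp_emb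
      (MeasurableEquiv.measurableEmbedding _)]
    simp_rw [MeasurableEquiv.piFinSuccAbove_symm_apply, Fin.insertNthEquiv,
      Fin.prod_univ_succ, Fin.insertNth_zero, Equiv.coe_fn_mk, Fin.cons_succ,
      Fin.zero_succAbove, Fin.cons_zero]
    show ∫⁻ (z : E 0 × ((i : Fin m) → E i.succ)), f 0 z.1 * ∏ i, f i.succ (z.2 i)
      ∂(μ 0).prod (Measure.pi fun j => μ j.succ) = _
    have h2 : Measurable (fun y : (j : Fin m) → E (Fin.succ j) => ∏ i, f (Fin.succ i) (y i)) :=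
      Finset.measurable_prod Finset.univ
        (fun i _ => (hf (Fin.succ i)).comp (measurable_pi_apply i))
    rw [lintegral_prod_mul (μ := μ 0) (ν := Measure.pi fun j => μ (Fin.succ j))
      (f := f 0) (g := fun y => ∏ i, f (Fin.succ i) (y i)) (hf 0).aemeasurable h2.aemeasurable]
    rw [ih (fun i => μ (Fin.succ i)) (fun i => f (Fin.succ i)) (fun i => hf (Fin.succ i))]

theorem goeAux_pi_withDensity {m : ℕ} {E : Fin m → Type*} [∀ i, MeasurableSpace (E i)]
    (μ : ∀ i, Measure (E i)) [∀ i, SigmaFinite (μ i)]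
    (f : ∀ i, E i → ENNReal) (hf : ∀ i, Measurable (f i))
    (hsf : ∀ i, SigmaFinite ((μ i).withDensity (f i))) :
    Measure.pi (fun i => (μ i).withDensity (f i)) =
      (Measure.pi μ).withDensity (fun x => ∏ i, f i (x i)) := by
  haveI := hsf
  refine Measure.pi_eq (μ := fun i => (μ i).withDensity (f i)) fun s hs => ?_
  rw [withDensity_apply _ (MeasurableSet.univ_pi hs)]
  have hind : ∀ x : (i : Fin m) → E i,
      (univ.pi s).indicator (fun x => ∏ i, f i (x i)) x =
        ∏ i, (s i).indicator (f i) (x i) := by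
    intro x
    by_cases hx : x ∈ univ.pi s
    · rw [indicator_of_mem hx]
      exact Finset.prod_congr rfl fun i _ => (indicator_of_mem (hx i trivial) _).symm
    · rw [indicator_of_notMem hx]
      rw [mem_univ_pi, not_forall] at hx
      obtain ⟨i, hi⟩ := hx
      exact (Finset.prod_eq_zero (Finset.mem_univ i) (indicator_of_notMem hi _)).symm
  rw [← lintegral_indicator (MeasurableSet.univ_pi hs) (fun x => ∏ i, f i (x i))]
  simp_rw [hind]
  rw [goeAux_lintegral_fin_prod _ (fun i => (s i).indicator (f i))
    (fun i => (hf i).indicator (hs i))]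
  exact Finset.prod_congr rfl fun i _ =>
    ((lintegral_indicator (hs i) _).trans (withDensity_apply _ (hs i)).symm)

theorem goeAux_map_withDensity {α β : Type*} [MeasurableSpace α] [MeasurableSpace β]
    (μ : Measure α) {e : α → β} (he : Measurable e) {g : β → ENNReal} (hg : Measurable g) :
    Measure.map e (μ.withDensity (fun x => g (e x))) = (Measure.map e μ).withDensity g := by
  refine Measure.ext fun s hs => ?_
  rw [Measure.map_apply he hs, withDensity_apply _ (he hs), withDensity_apply _ hs,
    setLIntegral_map hs hg he]

theorem goeAux_prod_pdf (n : ℕ) (v : NNReal) (x : Fin n → Fin n → ℝ) :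
    ∏ i, ∏ j, gaussianPDFReal 0 v (x i j) =
      (Real.sqrt (2 * Real.pi * v))⁻¹ ^ (n * n) *
        Real.exp (-(∑ i, ∑ j, (x i j)^2) / (2 * (v : ℝ))) := by
  simp only [gaussianPDFReal, sub_zero]
  simp only [Finset.prod_mul_distrib, Finset.prod_const, Finset.card_univ,
    Fintype.card_fin, ← Real.exp_sum, ← pow_mul]
  congr 1
  congr 1
  simp only [neg_div, Finset.sum_neg_distrib, Finset.sum_div]

/-- Pushforward of iid gaussian matrix measure by a linear norm-preserving map with
nonzero determinant. -/
theorem goeAux_map_linear (n : ℕ) (σ : ℝ) (hσ : 0 < σ)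
    (f : (Fin n → Fin n → ℝ) →ₗ[ℝ] (Fin n → Fin n → ℝ))
    (hdet : LinearMap.det f ≠ 0)
    (hnorm : ∀ x, ∑ i, ∑ j, (f x i j)^2 = ∑ i, ∑ j, (x i j)^2) :
    Measure.map f (Measure.pi fun _ : Fin n => Measure.pi fun _ : Fin n =>
        gaussianReal 0 ⟨σ ^ 2, sq_nonneg σ⟩) =
      Measure.pi fun _ : Fin n => Measure.pi fun _ : Fin n =>
        gaussianReal 0 ⟨σ ^ 2, sq_nonneg σ⟩ := by
  set v : NNReal := ⟨σ ^ 2, sq_nonneg σ⟩ with hv_def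
  have hv : v ≠ 0 := by
    intro h
    exact (pow_pos hσ 2).ne' (congrArg NNReal.toReal h)
  set γ0 : Measure (Fin n → Fin n → ℝ) :=
    Measure.pi fun _ : Fin n => Measure.pi fun _ : Fin n => gaussianReal 0 v with hγ0
  have hgauss : gaussianReal 0 v = (volume : Measure ℝ).withDensity (gaussianPDF 0 v) :=
    gaussianReal_of_var_ne_zero 0 hv
  have hpdf_meas : Measurable (gaussianPDF 0 v) := measurable_gaussianPDF 0 v
  have inst1 : ∀ _ : Fin n, SigmaFinite ((volume : Measure ℝ).withDensity (gaussianPDF 0 v)) :=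
    fun _ => by rw [← hgauss]; infer_instance
  have hν : (Measure.pi fun _ : Fin n => gaussianReal 0 v) =
      (volume : Measure (Fin n → ℝ)).withDensity (fun y => ∏ j, gaussianPDF 0 v (y j)) := by
    rw [volume_pi]
    calc Measure.pi (fun _ : Fin n => gaussianReal 0 v)
        = Measure.pi (fun _ : Fin n =>
            (volume : Measure ℝ).withDensity (gaussianPDF 0 v)) := by rw [← hgauss]
      _ = _ := goeAux_pi_withDensity (fun _ : Fin n => (volume : Measure ℝ))
            (fun _ => gaussianPDF 0 v) (fun _ => hpdf_meas) inst1
  have hG_meas : Measurable (fun y : Fin n → ℝ => ∏ j, gaussianPDF 0 v (y j)) :=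
    Finset.measurable_prod _ fun j _ => hpdf_meas.comp (measurable_pi_apply j)
  have inst2 : ∀ _ : Fin n, SigmaFinite ((volume : Measure (Fin n → ℝ)).withDensity
      (fun y => ∏ j, gaussianPDF 0 v (y j))) :=
    fun _ => by rw [← hν]; infer_instance
  have hγ0d : γ0 = (volume : Measure (Fin n → Fin n → ℝ)).withDensity
      (fun x => ∏ i, ∏ j, gaussianPDF 0 v (x i j)) := by
    rw [hγ0, volume_pi]
    calc Measure.pi (fun _ : Fin n => Measure.pi fun _ : Fin n => gaussianReal 0 v)
        = Measure.pi (fun _ : Fin n => (volume : Measure (Fin n → ℝ)).withDensity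
            (fun y => ∏ j, gaussianPDF 0 v (y j))) := by rw [← hν]
      _ = _ := goeAux_pi_withDensity (fun _ : Fin n => (volume : Measure (Fin n → ℝ)))
            (fun _ => fun y => ∏ j, gaussianPDF 0 v (y j)) (fun _ => hG_meas) inst2
  set F : (Fin n → Fin n → ℝ) → ENNReal := fun x => ∏ i, ∏ j, gaussianPDF 0 v (x i j) with hF
  have hF_meas : Measurable F :=
    Finset.measurable_prod _ fun i _ => Finset.measurable_prod _ fun j _ =>
      hpdf_meas.comp ((measurable_pi_apply j).comp (measurable_pi_apply i))
  have hprod : ∀ x : Fin n → Fin n → ℝ, F x = ENNReal.ofReal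
      ((Real.sqrt (2 * Real.pi * v))⁻¹ ^ (n * n) *
        Real.exp (-(∑ i, ∑ j, (x i j)^2) / (2 * (v : ℝ)))) := by
    intro x
    rw [hF]
    simp only [gaussianPDF]
    calc (∏ i, ∏ j, ENNReal.ofReal (gaussianPDFReal 0 v (x i j)))
        = ∏ i, ENNReal.ofReal (∏ j, gaussianPDFReal 0 v (x i j)) :=
          Finset.prod_congr rfl fun i _ =>
            (ENNReal.ofReal_prod_of_nonneg fun j _ => gaussianPDFReal_nonneg 0 v (x i j)).symm
      _ = ENNReal.ofReal (∏ i, ∏ j, gaussianPDFReal 0 v (x i j)) :=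
          (ENNReal.ofReal_prod_of_nonneg fun i _ =>
            Finset.prod_nonneg fun j _ => gaussianPDFReal_nonneg 0 v (x i j)).symm
      _ = _ := by rw [goeAux_prod_pdf]
  have hFf : (fun x => F (f x)) = F := funext fun x => by rw [hprod, hprod, hnorm x]
  have hf_meas : Measurable f := f.continuous_of_finiteDimensional.measurable
  have hc : Measure.map f γ0 = ENNReal.ofReal |(LinearMap.det f)⁻¹| • γ0 := by
    have h := goeAux_map_withDensity (volume : Measure (Fin n → Fin n → ℝ)) hf_meas hF_meas
    rw [hFf] at h
    rw [hγ0d, h, Measure.map_linearMap_addHaar_eq_smul_addHaar volume hdet,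
      withDensity_smul_measure, ← hγ0d]
  haveI hprob : IsProbabilityMeasure γ0 := by rw [hγ0]; infer_instance
  have h1 : (ENNReal.ofReal |(LinearMap.det f)⁻¹| • γ0) Set.univ = 1 := by
    rw [← hc, Measure.map_apply hf_meas MeasurableSet.univ, Set.preimage_univ]
    exact measure_univ
  have hone : ENNReal.ofReal |(LinearMap.det f)⁻¹| = 1 := by
    simpa [measure_univ] using h1
  rw [hc, hone, one_smul]

/-- Conjugation by `D` as a linear map on matrices. -/
noncomputable def goeConjL {n : ℕ} (D : Matrix (Fin n) (Fin n) ℝ) :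
    Matrix (Fin n) (Fin n) ℝ →ₗ[ℝ] Matrix (Fin n) (Fin n) ℝ where
  toFun A := D * A * Dᵀ
  map_add' A B := by simp [Matrix.mul_add, Matrix.add_mul]
  map_smul' c A := by simp [Matrix.mul_smul, Matrix.smul_mul]

theorem goeConjL_det_ne_zero {n : ℕ} (D : Matrix (Fin n) (Fin n) ℝ) (hD : D * Dᵀ = 1) :
    LinearMap.det (goeConjL D) ≠ 0 := by
  have hcomp : (goeConjL D).comp (goeConjL Dᵀ) = LinearMap.id := by
    refine LinearMap.ext fun A => ?_
    show D * (Dᵀ * A * Dᵀᵀ) * Dᵀ = A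
    rw [Matrix.transpose_transpose,
      show D * (Dᵀ * A * D) * Dᵀ = (D * Dᵀ) * A * (D * Dᵀ) by
        simp only [Matrix.mul_assoc],
      hD, one_mul, Matrix.mul_one]
  have h := congrArg LinearMap.det hcomp
  rw [LinearMap.det_comp, LinearMap.det_id] at h
  exact left_ne_zero_of_mul_eq_one h

theorem goeConj_frobenius {n : ℕ} (D : Matrix (Fin n) (Fin n) ℝ) (hD : D * Dᵀ = 1)
    (A : Matrix (Fin n) (Fin n) ℝ) :
    ∑ i, ∑ j, ((D * A * Dᵀ) i j)^2 = ∑ i, ∑ j, (A i j)^2 := by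
  have h2 : Dᵀ * D = 1 := mul_eq_one_comm.mp hD
  have hDD : ∀ X : Matrix (Fin n) (Fin n) ℝ, Dᵀ * (D * X) = X := fun X => by
    rw [← Matrix.mul_assoc, h2, one_mul]
  have frob : ∀ M : Matrix (Fin n) (Fin n) ℝ,
      ∑ i, ∑ j, (M i j)^2 = Matrix.trace (M * Mᵀ) := fun M => by
    simp [Matrix.trace, Matrix.diag, Matrix.mul_apply, Matrix.transpose_apply, sq]
  rw [frob, frob]
  have key : (D * A * Dᵀ) * (D * A * Dᵀ)ᵀ = D * ((A * Aᵀ) * Dᵀ) := by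
    simp only [Matrix.transpose_mul, Matrix.transpose_transpose, Matrix.mul_assoc, hDD]
  rw [key, Matrix.trace_mul_comm, Matrix.mul_assoc, Matrix.mul_assoc, h2, Matrix.mul_one]

theorem goeAux_conj_invariant (n : ℕ) (σ : ℝ) (hσ : 0 < σ)
    (D : Matrix (Fin n) (Fin n) ℝ) (hD : D * Dᵀ = 1) :
    Measure.map (fun A : Matrix (Fin n) (Fin n) ℝ => D * A * Dᵀ)
        (Measure.pi fun _ : Fin n => Measure.pi fun _ : Fin n =>
          gaussianReal 0 ⟨σ ^ 2, sq_nonneg σ⟩) =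
      Measure.pi fun _ : Fin n => Measure.pi fun _ : Fin n =>
        gaussianReal 0 ⟨σ ^ 2, sq_nonneg σ⟩ :=
  goeAux_map_linear n σ hσ (goeConjL D) (goeConjL_det_ne_zero D hD)
    (fun A => goeConj_frobenius D hD A)

/-- The law of the symmetric Gaussian (GOE) matrix `M = A + Aᵀ`, with `A` having
i.i.d. `gaussianReal 0 σ²` entries, is invariant under conjugation by an orthogonal
matrix `D`: pushing forward by `A ↦ D * (A + Aᵀ) * Dᵀ` gives the same measure as
pushing forward by `A ↦ A + Aᵀ`. -/
theorem goe_orthogonal_conj_invariant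
    (n : ℕ) (σ : ℝ) (hσ : 0 < σ)
    (γ : Measure (Matrix (Fin n) (Fin n) ℝ))
    (hγ : γ = Measure.pi fun _ : Fin n =>
      Measure.pi fun _ : Fin n => gaussianReal 0 ⟨σ ^ 2, sq_nonneg σ⟩)
    (D : Matrix (Fin n) (Fin n) ℝ) (hD : D * Dᵀ = 1) :
    Measure.map (fun A : Matrix (Fin n) (Fin n) ℝ => D * (A + Aᵀ) * Dᵀ) γ =
      Measure.map (fun A : Matrix (Fin n) (Fin n) ℝ => A + Aᵀ) γ := by
  have hconj_meas : Measurable (fun A : Matrix (Fin n) (Fin n) ℝ => D * A * Dᵀ) := by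
    refine measurable_pi_iff.2 fun i => measurable_pi_iff.2 fun j => ?_
    simp only [Matrix.mul_apply]
    exact Finset.measurable_sum _ fun k _ =>
      ((Finset.measurable_sum _ fun l _ =>
        (((measurable_pi_apply k).comp (measurable_pi_apply l) :
          Measurable fun x : Fin n → Fin n → ℝ => x l k)).const_mul (D i l)).mul_const _)
  have hadd_meas : Measurable (fun A : Matrix (Fin n) (Fin n) ℝ => A + Aᵀ) := by
    refine measurable_pi_iff.2 fun i => measurable_pi_iff.2 fun j => ?_
    show Measurable fun A : Matrix (Fin n) (Fin n) ℝ => A i j + A j i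
    exact (((measurable_pi_apply j).comp (measurable_pi_apply i) :
      Measurable fun x : Fin n → Fin n → ℝ => x i j)).add
      (((measurable_pi_apply i).comp (measurable_pi_apply j) :
      Measurable fun x : Fin n → Fin n → ℝ => x j i))
  have hfun : (fun A : Matrix (Fin n) (Fin n) ℝ => D * (A + Aᵀ) * Dᵀ) =
      (fun A : Matrix (Fin n) (Fin n) ℝ => A + Aᵀ) ∘
        (fun A : Matrix (Fin n) (Fin n) ℝ => D * A * Dᵀ) := by
    funext A
    show D * (A + Aᵀ) * Dᵀ = (D * A * Dᵀ) + (D * A * Dᵀ)ᵀ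
    simp only [Matrix.transpose_mul, Matrix.transpose_transpose, Matrix.mul_add,
      Matrix.add_mul, Matrix.mul_assoc]
  rw [hfun, ← Measure.map_map hadd_meas hconj_meas]
  congr 1
  rw [hγ]
  exact goeAux_conj_invariant n σ hσ D hD
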